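/- Let k and m be nonnegative integers with k < m. Then the improper integral lim_{R→∞} ∫_0^R y^k e^{i y^{m+1}} dy exists and equals (1/(m+1)) · Γ((k+1)/(m+1)) · e^{iπ(k+1)/(2(m+1))}, where Γ is the Gamma function. -/

import Mathlib

open MeasureTheory Filter Topology intervalIntegral

namespace FresnelAux

open Complex Set

noncomputable def f (k n : ℕ) (z : ℂ) : ℂ := z ^ k * Complex.exp (Complex.I * z ^ n)

lemma f_diff (k n : ℕ) : Differentiable ℂ (f k n) := by
  unfold f
  exact (differentiable_pow k).mul ((Complex.differentiable_exp).comp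
    (differentiable_const _ |>.mul (differentiable_pow n)))

lemma f_cont_real (k n : ℕ) : Continuous (fun t : ℝ => f k n t) :=
  (f_diff k n).continuous.comp Complex.continuous_ofReal

lemma rot (n : ℕ) (hn : 0 < n) :
    Complex.exp ((Real.pi / (2 * n) : ℝ) * Complex.I) ^ n = Complex.I := by
  rw [← Complex.exp_nat_mul]
  have hn' : (n : ℂ) ≠ 0 := Nat.cast_ne_zero.mpr hn.ne'
  have : (n : ℂ) * ((Real.pi / (2 * n) : ℝ) * Complex.I)
      = ((Real.pi / 2 : ℝ) : ℂ) * Complex.I := by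
    push_cast
    field_simp
  rw [this, Complex.exp_mul_I, ← Complex.ofReal_cos, ← Complex.ofReal_sin,
    Real.cos_pi_div_two, Real.sin_pi_div_two]
  simp

lemma norm_integrand (k n : ℕ) {r : ℝ} (hr : 0 ≤ r) (y : ℝ) :
    ‖f k n ((r : ℂ) * Complex.exp ((y : ℂ) * Complex.I))
        * ((r : ℂ) * Complex.exp ((y : ℂ) * Complex.I))‖
      = r ^ (k + 1) * Real.exp (-(r ^ n * Real.sin (n * y))) := by
  have hzn : (((r : ℂ)) * Complex.exp ((y : ℂ) * Complex.I)) ^ n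
      = ((r ^ n : ℝ) : ℂ) * Complex.exp ((((n : ℝ) * y : ℝ) : ℂ) * Complex.I) := by
    push_cast
    rw [mul_pow, ← Complex.exp_nat_mul]
    ring_nf
  have habs : ‖(r : ℂ) * Complex.exp ((y : ℂ) * Complex.I)‖ = r := by
    simp [Complex.norm_exp, _root_.abs_of_nonneg hr]
  have hre : (Complex.I * ((((r ^ n : ℝ)) : ℂ)
      * Complex.exp ((((n : ℝ) * y : ℝ) : ℂ) * Complex.I))).re
      = -(r ^ n * Real.sin (n * y)) := by
    simp only [Complex.mul_re, Complex.mul_im, Complex.I_re, Complex.I_im,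
      Complex.ofReal_re, Complex.ofReal_im, Complex.exp_ofReal_mul_I_re,
      Complex.exp_ofReal_mul_I_im, Nat.cast_mul]
    push_cast
    ring
  unfold f
  rw [norm_mul, norm_mul,
    norm_pow, habs, hzn, Complex.norm_exp, hre]
  ring

lemma edge_bot (k n : ℕ) (x : ℝ) :
    f k n (Complex.exp (x : ℂ)) * Complex.exp (x : ℂ)
      = Real.exp x • f k n ((Real.exp x : ℝ) : ℂ) := by
  rw [← Complex.ofReal_exp, Complex.real_smul, mul_comm]

lemma edge_top (k n : ℕ) (hn : 0 < n) (x : ℝ) :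
    f k n (Complex.exp ((x : ℂ) + ((Real.pi / (2 * n) : ℝ) : ℂ) * Complex.I))
        * Complex.exp ((x : ℂ) + ((Real.pi / (2 * n) : ℝ) : ℂ) * Complex.I)
      = Real.exp x • (Complex.exp (Complex.I * (Real.pi : ℂ) * ((k : ℂ) + 1) / (2 * (n : ℂ)))
          * (((Real.exp x : ℝ) : ℂ) ^ k * Complex.exp (-((Real.exp x : ℝ) : ℂ) ^ n))) := by
  have hE : Complex.exp ((x : ℂ) + ((Real.pi / (2 * n) : ℝ) : ℂ) * Complex.I)
      = ((Real.exp x : ℝ) : ℂ) * Complex.exp (((Real.pi / (2 * n) : ℝ) : ℂ) * Complex.I) := by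
    rw [Complex.exp_add, Complex.ofReal_exp]
  have hc : Complex.exp (Complex.I * (Real.pi : ℂ) * ((k : ℂ) + 1) / (2 * (n : ℂ)))
      = Complex.exp (((Real.pi / (2 * n) : ℝ) : ℂ) * Complex.I) ^ (k + 1) := by
    rw [← Complex.exp_nat_mul]
    congr 1
    push_cast
    ring
  have harg : Complex.I * (((Real.exp x : ℝ) : ℂ) * Complex.exp (((Real.pi / (2 * n) : ℝ) : ℂ) * Complex.I)) ^ n
      = -((Real.exp x : ℝ) : ℂ) ^ n := by
    rw [mul_pow, rot n hn]
    rw [show Complex.I * (((Real.exp x : ℝ) : ℂ) ^ n * Complex.I)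
      = ((Real.exp x : ℝ) : ℂ) ^ n * (Complex.I * Complex.I) from by ring, Complex.I_mul_I]
    ring
  unfold f
  rw [hE, mul_pow, harg, Complex.real_smul, hc, pow_succ]
  ring

noncomputable def h₂ (k n : ℕ) (t : ℝ) : ℂ := (t : ℂ) ^ k * Complex.exp (-(t : ℂ) ^ n)

lemma h₂_cont (k n : ℕ) : Continuous (h₂ k n) := by
  unfold h₂; fun_prop

noncomputable def arc (k n : ℕ) (r : ℝ) : ℂ :=
  ∫ y in (0:ℝ)..(Real.pi / (2 * n)),
    f k n ((r : ℂ) * Complex.exp ((y : ℂ) * Complex.I))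
      * ((r : ℂ) * Complex.exp ((y : ℂ) * Complex.I))

lemma sector (k n : ℕ) (hn : 0 < n) {R : ℝ} (hR : 0 < R) :
    ∫ y in (0:ℝ)..R, f k n y
      = Complex.exp (Complex.I * (Real.pi : ℂ) * ((k : ℂ) + 1) / (2 * (n : ℂ)))
          * (∫ t in (0:ℝ)..R, h₂ k n t)
        - Complex.I * arc k n R := by
  set θ : ℝ := Real.pi / (2 * n) with hθ
  have hθpos : 0 < θ := by
    have : (0:ℝ) < n := by exact_mod_cast hn
    positivity
  set c : ℂ := Complex.exp (Complex.I * (Real.pi : ℂ) * ((k : ℂ) + 1) / (2 * (n : ℂ))) with hc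
  -- the identity for each positive δ < R
  have key : ∀ δ ∈ Ioo (0:ℝ) R,
      (∫ t in δ..R, f k n t)
        = c * (∫ t in δ..R, h₂ k n t) - Complex.I * arc k n R + Complex.I * arc k n δ := by
    intro δ hδ
    obtain ⟨hδ0, hδR⟩ := hδ
    set g : ℂ → ℂ := fun w => f k n (Complex.exp w) * Complex.exp w with hg
    have hgd : Differentiable ℂ g := ((f_diff k n).comp Complex.differentiable_exp).mul
      Complex.differentiable_exp
    have rect := Complex.integral_boundary_rect_eq_zero_of_differentiableOn g
      ((Real.log δ : ℝ) : ℂ) (((Real.log R : ℝ) : ℂ) + (θ : ℂ) * Complex.I)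
      (hgd.differentiableOn)
    simp only [Complex.add_re, Complex.add_im, Complex.ofReal_re, Complex.ofReal_im,
      Complex.mul_re, Complex.mul_im, Complex.I_re, Complex.I_im, mul_zero, mul_one,
      zero_mul, sub_zero, zero_sub, zero_add, add_zero, neg_zero] at rect
    -- rect : (∫ x in log δ..log R, g (x + 0*I)) - (∫ x in log δ..log R, g (x + θ*I))
    --   + I • (∫ y in 0..θ, g (log R + y*I)) - I • (∫ y in 0..θ, g (log δ + y*I)) = 0
    have t1 : (∫ x in Real.log δ..Real.log R, g ((x : ℂ) + ((0:ℝ) : ℂ) * Complex.I))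
        = ∫ t in δ..R, f k n t := by
      have : ∀ x : ℝ, g ((x : ℂ) + ((0:ℝ) : ℂ) * Complex.I)
          = Real.exp x • ((fun t : ℝ => f k n t) ∘ Real.exp) x := by
        intro x
        simp only [Complex.ofReal_zero, zero_mul, add_zero, hg, Function.comp]
        exact edge_bot k n x
      rw [intervalIntegral.integral_congr (fun x _ => this x),
        intervalIntegral.integral_comp_smul_deriv (fun x _ => Real.hasDerivAt_exp x)
          Real.continuous_exp.continuousOn (f_cont_real k n),
        Real.exp_log hδ0, Real.exp_log hR]
    have t2 : (∫ x in Real.log δ..Real.log R, g ((x : ℂ) + (θ : ℂ) * Complex.I))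
        = c * ∫ t in δ..R, h₂ k n t := by
      have : ∀ x : ℝ, g ((x : ℂ) + (θ : ℂ) * Complex.I)
          = Real.exp x • ((fun t : ℝ => c * h₂ k n t) ∘ Real.exp) x := by
        intro x
        simpa only [hg, hθ, Function.comp, h₂] using edge_top k n hn x
      rw [intervalIntegral.integral_congr (fun x _ => this x),
        intervalIntegral.integral_comp_smul_deriv (fun x _ => Real.hasDerivAt_exp x)
          Real.continuous_exp.continuousOn
            (show Continuous (fun t : ℝ => c * h₂ k n t) from continuous_const.mul (h₂_cont k n)),
        Real.exp_log hδ0, Real.exp_log hR, intervalIntegral.integral_const_mul]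
    have t3 : ∀ {r : ℝ}, 0 < r →
        (∫ y in (0:ℝ)..θ, g ((Real.log r : ℂ) + (y : ℂ) * Complex.I)) = arc k n r := by
      intro r hr
      refine intervalIntegral.integral_congr fun y _ => ?_
      have : Complex.exp ((Real.log r : ℂ) + (y : ℂ) * Complex.I)
          = (r : ℂ) * Complex.exp ((y : ℂ) * Complex.I) := by
        rw [Complex.exp_add, ← Complex.ofReal_exp, Real.exp_log hr]
      simp only [hg, this]
    rw [t1, t2, t3 hR, t3 hδ0, smul_eq_mul, smul_eq_mul] at rect
    linear_combination rect
  -- now take δ → 0⁺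
  have hmem : Ioo (0:ℝ) R ∈ 𝓝[>] (0:ℝ) := Ioo_mem_nhdsGT_of_mem ⟨le_refl 0, hR⟩
  have hF : Tendsto (fun δ : ℝ => ∫ t in δ..R, f k n t) (𝓝[>] (0:ℝ))
      (𝓝 (∫ t in (0:ℝ)..R, f k n t)) := by
    have contF : Continuous fun δ : ℝ => ∫ t in R..δ, f k n t :=
      intervalIntegral.continuous_primitive
        (fun a b => (f_cont_real k n).intervalIntegrable a b) R
    have : Tendsto (fun δ : ℝ => -∫ t in R..δ, f k n t) (𝓝[>] (0:ℝ))
        (𝓝 (-∫ t in R..(0:ℝ), f k n t)) :=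
      ((contF.tendsto 0).mono_left nhdsWithin_le_nhds).neg
    simpa [← intervalIntegral.integral_symm] using this
  have hH : Tendsto (fun δ : ℝ => ∫ t in δ..R, h₂ k n t) (𝓝[>] (0:ℝ))
      (𝓝 (∫ t in (0:ℝ)..R, h₂ k n t)) := by
    have contF : Continuous fun δ : ℝ => ∫ t in R..δ, h₂ k n t :=
      intervalIntegral.continuous_primitive
        (fun a b => (h₂_cont k n).intervalIntegrable a b) R
    have : Tendsto (fun δ : ℝ => -∫ t in R..δ, h₂ k n t) (𝓝[>] (0:ℝ))
        (𝓝 (-∫ t in R..(0:ℝ), h₂ k n t)) :=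
      ((contF.tendsto 0).mono_left nhdsWithin_le_nhds).neg
    simpa [← intervalIntegral.integral_symm] using this
  have harc0 : Tendsto (fun δ : ℝ => arc k n δ) (𝓝[>] (0:ℝ)) (𝓝 0) := by
    apply squeeze_zero_norm' (a := fun δ : ℝ => δ * Real.exp 1 * |θ - 0|)
    · filter_upwards [Ioo_mem_nhdsGT_of_mem (⟨le_refl 0, zero_lt_one⟩ : (0:ℝ) ∈ Ico 0 1)]
        with δ hδ
      apply intervalIntegral.norm_integral_le_of_norm_le_const
      intro y _
      rw [norm_integrand k n hδ.1.le y]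
      have h1 : δ ^ (k+1) ≤ δ := by
        calc δ ^ (k+1) ≤ δ ^ 1 := pow_le_pow_of_le_one hδ.1.le hδ.2.le (by omega)
        _ = δ := pow_one δ
      have h2 : Real.exp (-(δ ^ n * Real.sin (n * y))) ≤ Real.exp 1 := by
        apply Real.exp_le_exp.mpr
        have hs : -1 ≤ Real.sin (n * y) := Real.neg_one_le_sin _
        have hp : (0:ℝ) ≤ δ ^ n := pow_nonneg hδ.1.le n
        have hp1 : δ ^ n ≤ 1 := pow_le_one₀ hδ.1.le hδ.2.le
        nlinarith
      exact mul_le_mul h1 h2 (Real.exp_pos _).le hδ.1.le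
    · have : Tendsto (fun δ : ℝ => δ * Real.exp 1 * |θ - 0|) (𝓝 (0:ℝ))
          (𝓝 ((0:ℝ) * Real.exp 1 * |θ - 0|)) :=
        ((continuous_id.mul continuous_const).mul continuous_const).tendsto 0
      simpa using this.mono_left nhdsWithin_le_nhds
  have hRHS : Tendsto (fun δ : ℝ => c * (∫ t in δ..R, h₂ k n t) - Complex.I * arc k n R
      + Complex.I * arc k n δ) (𝓝[>] (0:ℝ))
      (𝓝 (c * (∫ t in (0:ℝ)..R, h₂ k n t) - Complex.I * arc k n R + Complex.I * 0)) :=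
    ((hH.const_mul c).sub tendsto_const_nhds).add (harc0.const_mul Complex.I)
  have heq : (fun δ : ℝ => ∫ t in δ..R, f k n t) =ᶠ[𝓝[>] (0:ℝ)]
      (fun δ : ℝ => c * (∫ t in δ..R, h₂ k n t) - Complex.I * arc k n R
        + Complex.I * arc k n δ) :=
    Filter.eventuallyEq_of_mem hmem key
  have := tendsto_nhds_unique hF (hRHS.congr' heq.symm)
  rw [this]
  ring



lemma cont_arc_integrand (k n : ℕ) (R : ℝ) :
    Continuous fun y : ℝ => f k n ((R : ℂ) * Complex.exp ((y : ℂ) * Complex.I))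
      * ((R : ℂ) * Complex.exp ((y : ℂ) * Complex.I)) := by
  have h : Continuous fun y : ℝ => (R : ℂ) * Complex.exp ((y : ℂ) * Complex.I) :=
    continuous_const.mul (Complex.continuous_exp.comp
      (Complex.continuous_ofReal.mul continuous_const))
  exact ((f_diff k n).continuous.comp h).mul h

lemma arc_tendsto (k n : ℕ) (hkn : k + 1 < n) :
    Tendsto (fun R : ℝ => Complex.I * arc k n R) atTop (𝓝 0) := by
  have hn : 0 < n := by omega
  have hnR : (0:ℝ) < n := by exact_mod_cast hn
  set θ : ℝ := Real.pi / (2 * n) with hθ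
  have hθpos : 0 < θ := by positivity
  apply squeeze_zero_norm' (a := fun R : ℝ => Real.pi / (2 * n) * (R ^ (n - (k+1)))⁻¹)
  · filter_upwards [eventually_ge_atTop (1:ℝ)] with R hR1
    have hR0 : (0:ℝ) < R := lt_of_lt_of_le zero_lt_one hR1
    set cc : ℝ := R ^ n * (2 / Real.pi) * n with hcc
    have hccpos : 0 < cc := by
      have := Real.pi_pos
      positivity
    rw [norm_mul, Complex.norm_I, one_mul]
    have contE : Continuous fun y : ℝ => R ^ (k+1) * Real.exp (-(cc * y)) := by
      fun_prop
    have step1 : ‖arc k n R‖ ≤ ∫ y in (0:ℝ)..θ, R ^ (k+1) * Real.exp (-(cc * y)) := by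
      refine (intervalIntegral.norm_integral_le_integral_norm hθpos.le).trans ?_
      apply intervalIntegral.integral_mono_on hθpos.le
      · exact ((cont_arc_integrand k n R).norm).intervalIntegrable _ _
      · exact contE.intervalIntegrable _ _
      · intro y hy
        rw [norm_integrand k n hR0.le y]
        apply mul_le_mul_of_nonneg_left _ (pow_nonneg hR0.le _)
        apply Real.exp_le_exp.mpr
        have h0 : 0 ≤ (n:ℝ) * y := mul_nonneg hnR.le hy.1
        have h1 : (n:ℝ) * y ≤ Real.pi / 2 := by
          have hnθ : (n:ℝ) * θ = Real.pi / 2 := by rw [hθ]; field_simp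
          nlinarith [hy.2]
        have hsin := Real.mul_le_sin h0 h1
        have hRn : (0:ℝ) ≤ R ^ n := (pow_pos hR0 n).le
        rw [hcc]
        nlinarith
    have FTC : ∫ y in (0:ℝ)..θ, Real.exp (-(cc * y))
        = (1 - Real.exp (-(cc * θ))) / cc := by
      have hderiv : ∀ y ∈ Set.uIcc (0:ℝ) θ,
          HasDerivAt (fun y : ℝ => -Real.exp (-(cc * y)) / cc) (Real.exp (-(cc * y))) y := by
        intro y _
        have h1 : HasDerivAt (fun y : ℝ => -(cc * y)) (-cc) y := by
          simpa using ((hasDerivAt_id y).const_mul cc).fun_neg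
        have h2 := (Real.hasDerivAt_exp (-(cc * y))).comp y h1
        have h3 : HasDerivAt (fun i => -((Real.exp ∘ fun y => -(cc * y)) i / cc))
            (-(Real.exp (-(cc * y)) * -cc / cc)) y := (h2.div_const cc).fun_neg
        convert h3 using 1
        · funext x
          simp [Function.comp, neg_div]
        · rw [mul_neg, neg_div, neg_neg, mul_div_assoc, div_self hccpos.ne', mul_one]
      rw [intervalIntegral.integral_eq_sub_of_hasDerivAt hderiv
        ((by fun_prop : Continuous fun y : ℝ => Real.exp (-(cc * y))).intervalIntegrable _ _)]
      norm_num
      ring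
    have step2 : ∫ y in (0:ℝ)..θ, R ^ (k+1) * Real.exp (-(cc * y))
        = R ^ (k+1) * ((1 - Real.exp (-(cc * θ))) / cc) := by
      rw [intervalIntegral.integral_const_mul, FTC]
    have step3 : R ^ (k+1) * ((1 - Real.exp (-(cc * θ))) / cc)
        ≤ Real.pi / (2 * n) * (R ^ (n - (k+1)))⁻¹ := by
      have hle : (1 - Real.exp (-(cc * θ))) / cc ≤ 1 / cc := by
        gcongr
        · linarith [Real.exp_pos (-(cc * θ))]
      have heq : R ^ (k+1) * (1 / cc) = Real.pi / (2 * n) * (R ^ (n - (k+1)))⁻¹ := by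
        have hsplit : R ^ n = R ^ (k+1) * R ^ (n - (k+1)) := by
          rw [← pow_add]; congr 1; omega
        rw [hcc, hsplit]
        have hpi := Real.pi_ne_zero
        have hR1' : R ≠ 0 := hR0.ne'
        field_simp
      calc R ^ (k+1) * ((1 - Real.exp (-(cc * θ))) / cc)
          ≤ R ^ (k+1) * (1 / cc) := by
            exact mul_le_mul_of_nonneg_left hle (pow_nonneg hR0.le _)
        _ = Real.pi / (2 * n) * (R ^ (n - (k+1)))⁻¹ := heq
    calc ‖arc k n R‖ ≤ ∫ y in (0:ℝ)..θ, R ^ (k+1) * Real.exp (-(cc * y)) := step1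
      _ = R ^ (k+1) * ((1 - Real.exp (-(cc * θ))) / cc) := step2
      _ ≤ Real.pi / (2 * n) * (R ^ (n - (k+1)))⁻¹ := step3
  · have h0 : Tendsto (fun R : ℝ => R ^ (n - (k+1))) atTop atTop :=
      Filter.tendsto_pow_atTop (by omega : n - (k+1) ≠ 0)
    have h1 : Tendsto (fun R : ℝ => (R ^ (n - (k+1)))⁻¹) atTop (𝓝 0) :=
      tendsto_inv_atTop_zero.comp h0
    simpa using h1.const_mul (Real.pi / (2 * n))

lemma h₂_eq (k n : ℕ) {x : ℝ} (hx : x ∈ Ioi (0:ℝ)) :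
    ((x ^ (k:ℝ) * Real.exp (-x ^ (n:ℝ)) : ℝ) : ℂ) = h₂ k n x := by
  simp only [h₂]
  rw [Real.rpow_natCast, Real.rpow_natCast, Complex.ofReal_mul, Complex.ofReal_exp]
  push_cast
  try ring

lemma h₂_integrableOn (k n : ℕ) (hn : 0 < n) : IntegrableOn (h₂ k n) (Ioi (0:ℝ)) := by
  have h1 : IntegrableOn (fun x : ℝ => x ^ (k:ℝ) * Real.exp (-x ^ (n:ℝ))) (Ioi 0) :=
    integrableOn_rpow_mul_exp_neg_rpow
      (by have := Nat.cast_nonneg (α := ℝ) k; linarith : (-1:ℝ) < k)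
      (by exact_mod_cast hn : (0:ℝ) < n)
  have h2 : IntegrableOn (fun x : ℝ => ((x ^ (k:ℝ) * Real.exp (-x ^ (n:ℝ)) : ℝ) : ℂ))
      (Ioi (0:ℝ)) := h1.ofReal (𝕜 := ℂ)
  exact MeasureTheory.IntegrableOn.congr_fun h2 (fun x hx => h₂_eq k n hx) measurableSet_Ioi

lemma h₂_integral (k n : ℕ) (hn : 0 < n) :
    ∫ t in Ioi (0:ℝ), h₂ k n t
      = ((1 / (n:ℝ) * Real.Gamma (((k:ℝ) + 1) / (n:ℝ)) : ℝ) : ℂ) := by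
  have heq : ∫ t in Ioi (0:ℝ), h₂ k n t
      = ∫ t in Ioi (0:ℝ), ((t ^ (k:ℝ) * Real.exp (-t ^ (n:ℝ)) : ℝ) : ℂ) :=
    (setIntegral_congr_fun measurableSet_Ioi fun x hx => (h₂_eq k n hx).symm)
  rw [heq, ← _root_.integral_rpow_mul_exp_neg_rpow
    (by exact_mod_cast hn : (0:ℝ) < n)
    (by have := Nat.cast_nonneg (α := ℝ) k; linarith : (-1:ℝ) < k)]
  exact _root_.integral_ofReal

end FresnelAux

/-- For nonnegative integers `k < m`, the improper (oscillatory) integral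
`∫_0^∞ y^k e^{i y^{m+1}} dy`, understood as the limit of `∫_0^R` as `R → ∞`,
exists and equals `(1/(m+1)) Γ((k+1)/(m+1)) e^{iπ(k+1)/(2(m+1))}`. -/
theorem improper_power_fresnel (k m : ℕ) (hkm : k < m) :
    Filter.Tendsto
      (fun R : ℝ => ∫ y in (0:ℝ)..R, (y : ℂ) ^ k * Complex.exp (Complex.I * (y : ℂ) ^ (m + 1)))
      Filter.atTop
      (𝓝 ((1 / ((m : ℂ) + 1)) * (Real.Gamma (((k : ℝ) + 1) / ((m : ℝ) + 1)) : ℂ) *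
        Complex.exp (Complex.I * (Real.pi : ℂ) * ((k : ℂ) + 1) / (2 * ((m : ℂ) + 1))))) := by
  have hn0 : 0 < m + 1 := Nat.succ_pos m
  have hkn : k + 1 < m + 1 := by omega
  set n := m + 1 with hn
  set c : ℂ := Complex.exp (Complex.I * (Real.pi : ℂ) * ((k : ℂ) + 1) / (2 * (n : ℂ))) with hc
  have hJ : Filter.Tendsto (fun R : ℝ => ∫ t in (0:ℝ)..R, FresnelAux.h₂ k n t) Filter.atTop
      (𝓝 ((1 / (n:ℝ) * Real.Gamma (((k:ℝ) + 1) / (n:ℝ)) : ℝ) : ℂ)) := by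
    have := MeasureTheory.intervalIntegral_tendsto_integral_Ioi 0
      (FresnelAux.h₂_integrableOn k n hn0) tendsto_id
    rwa [FresnelAux.h₂_integral k n hn0] at this
  have hcomb := (hJ.const_mul c).sub (FresnelAux.arc_tendsto k n hkn)
  rw [sub_zero] at hcomb
  have heq : (fun R : ℝ => c * (∫ t in (0:ℝ)..R, FresnelAux.h₂ k n t)
        - Complex.I * FresnelAux.arc k n R)
      =ᶠ[Filter.atTop]
      (fun R : ℝ => ∫ y in (0:ℝ)..R, (y : ℂ) ^ k * Complex.exp (Complex.I * (y : ℂ) ^ n)) := by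
    filter_upwards [Filter.eventually_gt_atTop (0:ℝ)] with R hR
    exact (FresnelAux.sector k n hn0 hR).symm
  have hfinal := hcomb.congr' heq
  have hval : (1 / ((m : ℂ) + 1)) * (Real.Gamma (((k : ℝ) + 1) / ((m : ℝ) + 1)) : ℂ) *
        Complex.exp (Complex.I * (Real.pi : ℂ) * ((k : ℂ) + 1) / (2 * ((m : ℂ) + 1)))
      = c * ((1 / (n:ℝ) * Real.Gamma (((k:ℝ) + 1) / (n:ℝ)) : ℝ) : ℂ) := by
    rw [hc]
    push_cast [hn]
    ring
  rw [hval]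
  exact hfinal
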